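/- Let b ∈ ℕ with b ≥ 1 and let U = [d] × [b]. For A ⊆ U and j ∈ [d] let A^{(j)} = A ∩ ({j} × [b]), and let x^A ∈ 𝒳 be the vector with j-th coordinate x^A_j = |A^{(j)}|·δ. If f : 𝒳 → ℝ is monotone and DR-submodular, then the set function f^U : 2^U → ℝ defined by f^U(A) = f(x^A) is monotone and submodular. -/

import Mathlib

/-- `x` lies in the lattice `𝒳`: each coordinate is a nonnegative integer multiple of `δ`. -/
def InLattice {d : ℕ} (δ : ℝ) (x : Fin d → ℝ) : Prop := ∀ i, ∃ n : ℕ, x i = n * δ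

/-- The `i`-th standard unit vector of `ℝ^d`. -/
def eVec {d : ℕ} (i : Fin d) : Fin d → ℝ := Pi.single i 1

/-- The vector `x^A ∈ 𝒳` associated with `A ⊆ U = [d] × [b]`: its `j`-th coordinate is
`|A ∩ ({j} × [b])| · δ`. -/
def vecOfSet {d b : ℕ} (δ : ℝ) (A : Finset (Fin d × Fin b)) : Fin d → ℝ :=
  fun j => ((A.filter (fun p => p.1 = j)).card : ℝ) * δ

lemma vecOfSet_inLattice {d b : ℕ} (δ : ℝ) (A : Finset (Fin d × Fin b)) :
    InLattice δ (vecOfSet δ A) := fun j => ⟨_, rfl⟩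

lemma vecOfSet_mono {d b : ℕ} {δ : ℝ} (hδ : 0 < δ) {A B : Finset (Fin d × Fin b)}
    (h : A ⊆ B) : vecOfSet δ A ≤ vecOfSet δ B := by
  intro j
  exact mul_le_mul_of_nonneg_right
    (by exact Nat.cast_le.mpr <| Finset.card_le_card (Finset.filter_subset_filter (fun p : Fin d × Fin b => p.1 = j) h)) hδ.le

lemma vecOfSet_insert {d b : ℕ} (δ : ℝ) {A : Finset (Fin d × Fin b)} {u : Fin d × Fin b}
    (hu : u ∉ A) : vecOfSet δ (insert u A) = vecOfSet δ A + δ • eVec u.1 := by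
  funext j
  simp only [vecOfSet, Pi.add_apply, Pi.smul_apply, eVec, Finset.filter_insert]
  by_cases h : u.1 = j
  · rw [if_pos h, Finset.card_insert_of_notMem (fun hc => hu (Finset.mem_filter.1 hc).1)]
    rw [h, Pi.single_eq_same, smul_eq_mul]
    push_cast; ring
  · rw [if_neg h, Pi.single_eq_of_ne (fun hc => h hc.symm), smul_eq_mul]
    ring

/-- If `f : 𝒳 → ℝ` is monotone and DR-submodular, then the set function
`f^U(A) = f(x^A)` on `U = [d] × [b]` is monotone and submodular. -/
theorem setFunction_monotone_submodular {d : ℕ} (hd : 1 ≤ d) (δ : ℝ) (hδ : 0 < δ)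
    (b : ℕ) (hb : 1 ≤ b)
    (f : (Fin d → ℝ) → ℝ)
    (hmono : ∀ x y : Fin d → ℝ, InLattice δ x → InLattice δ y → x ≤ y → f x ≤ f y)
    (hsub : ∀ x y : Fin d → ℝ, InLattice δ x → InLattice δ y → x ≤ y → ∀ i : Fin d,
      f (y + δ • eVec i) - f y ≤ f (x + δ • eVec i) - f x)
    (fU : Finset (Fin d × Fin b) → ℝ)
    (hfU : ∀ A, fU A = f (vecOfSet δ A)) :
    (∀ A B : Finset (Fin d × Fin b), A ⊆ B → fU A ≤ fU B) ∧
    (∀ A B : Finset (Fin d × Fin b), A ⊆ B → ∀ u ∉ B,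
      fU (insert u B) - fU B ≤ fU (insert u A) - fU A) := by
  constructor
  · intro A B hAB
    rw [hfU, hfU]
    exact hmono _ _ (vecOfSet_inLattice δ A) (vecOfSet_inLattice δ B) (vecOfSet_mono hδ hAB)
  · intro A B hAB u hu
    have huA : u ∉ A := fun h => hu (hAB h)
    rw [hfU, hfU, hfU, hfU, vecOfSet_insert δ hu, vecOfSet_insert δ huA]
    exact hsub _ _ (vecOfSet_inLattice δ A) (vecOfSet_inLattice δ B) (vecOfSet_mono hδ hAB) u.1
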